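/- For natural numbers n and k, the number of surjective functions from Fin k to Fin n, viewed as an integer, equals the alternating sum ∑_{j=0}^{n} (-1)^j · (n choose j) · (n - j)^k. -/

import Mathlib

theorem stmt_2 (n k : ℕ) :
    (Nat.card {γ : Fin k → Fin n // Function.Surjective γ} : ℤ) =
      ∑ j ∈ Finset.range (n + 1),
        (-1 : ℤ) ^ j * (n.choose j : ℤ) * ((n - j : ℕ) : ℤ) ^ k := by
  classical
  have hcard : Nat.card {γ : Fin k → Fin n // Function.Surjective γ}
      = ((Finset.univ : Finset (Fin n)).inf
          fun i ↦ (Finset.univ.filter fun γ : Fin k → Fin n ↦ ∀ x, γ x ≠ i)ᶜ).card := by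
    rw [Nat.card_eq_fintype_card, Fintype.card_subtype]
    congr 1
    ext γ
    simp [Function.Surjective, Finset.mem_inf, eq_comm]
  have hinf : ∀ t : Finset (Fin n),
      ((t.inf fun i ↦ Finset.univ.filter fun γ : Fin k → Fin n ↦ ∀ x, γ x ≠ i)).card
        = (n - t.card) ^ k := by
    intro t
    have : (t.inf fun i ↦ Finset.univ.filter fun γ : Fin k → Fin n ↦ ∀ x, γ x ≠ i)
        = Fintype.piFinset fun _ : Fin k ↦ tᶜ := by
      ext γ
      simp [Finset.mem_inf, Fintype.mem_piFinset]
      aesop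
    rw [this, Fintype.card_piFinset]
    simp [Finset.card_compl]
  rw [hcard, Finset.inclusion_exclusion_card_inf_compl]
  have key : ∀ t ∈ (Finset.univ : Finset (Fin n)).powerset,
      (-1 : ℤ) ^ t.card *
        ((t.inf fun i ↦ Finset.univ.filter fun γ : Fin k → Fin n ↦ ∀ x, γ x ≠ i)).card
        = (fun m : ℕ ↦ (-1 : ℤ) ^ m * ((n - m : ℕ) : ℤ) ^ k) t.card := by
    intro t _; rw [hinf t]; push_cast; ring
  rw [Finset.sum_congr rfl key]
  beta_reduce
  rw [Finset.sum_powerset_apply_card (f := fun m : ℕ ↦ (-1 : ℤ) ^ m * ((n - m : ℕ) : ℤ) ^ k)]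
  simp only [Finset.card_univ, Fintype.card_fin, zsmul_eq_mul]
  refine Finset.sum_congr rfl fun j _ ↦ by push_cast; ring
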